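/- Groth signature soundness for fixed randomness structure: if (R̂, S, T) with R̂ = Ĝ^r for some r ∈ ℤ_p* satisfies both verification equations under pk = Ĝ^x with a non-degenerate pairing, then S = (Y·G^x)^{1/r} and T = (Y^x·M)^{1/r}; in particular the message M is uniquely determined by (R̂, S, T, pk). -/
import Mathlib

section aux

variable {G1 G2 GT : Type*} [CommGroup G1] [CommGroup G2] [CommGroup GT]

lemma groth_pow_mod {Gp : Type*} [CommGroup Gp] (p : ℕ) (hord : ∀ g : Gp, g ^ p = 1)
    (g : Gp) (n : ℕ) : g ^ n = g ^ (n % p) := by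
  conv_lhs => rw [← Nat.div_add_mod n p]
  rw [pow_add, pow_mul, hord, one_pow, one_mul]

lemma groth_e_one_left (e : G1 → G2 → GT)
    (hbil1 : ∀ (A A' : G1) (B : G2), e (A * A') B = e A B * e A' B) (B : G2) :
    e 1 B = 1 := by
  have h := hbil1 1 1 B
  rw [one_mul] at h
  exact left_eq_mul.mp h

lemma groth_e_pow_left (e : G1 → G2 → GT)
    (hbil1 : ∀ (A A' : G1) (B : G2), e (A * A') B = e A B * e A' B)
    (A : G1) (B : G2) (n : ℕ) : e (A ^ n) B = (e A B) ^ n := by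
  induction n with
  | zero => simpa using groth_e_one_left e hbil1 B
  | succ k ih => rw [pow_succ, hbil1, ih, pow_succ]

lemma groth_e_pow_right (e : G1 → G2 → GT)
    (hbil1 : ∀ (A A' : G1) (B : G2), e (A * A') B = e A B * e A' B)
    (hbil2 : ∀ (A : G1) (B B' : G2), e A (B * B') = e A B * e A B')
    (A : G1) (B : G2) (n : ℕ) : e A (B ^ n) = (e A B) ^ n := by
  induction n with
  | zero =>
    have h := hbil2 A 1 1
    rw [one_mul] at h
    simpa using left_eq_mul.mp h
  | succ k ih => rw [pow_succ, hbil2, ih, pow_succ]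

end aux

/-- Groth signature soundness for fixed randomness structure: if `(R̂, S, T)` with
`R̂ = Ĝ^r` satisfies both verification equations under `pk = Ĝ^x` for a
non-degenerate pairing, then `S = (Y·G^x)^{1/r}` and `T = (Y^x·M)^{1/r}`; in
particular the message `M` is uniquely determined by `(R̂, S, T, pk)`. -/
theorem groth_soundness {G1 G2 GT : Type*} [CommGroup G1] [CommGroup G2] [CommGroup GT]
    (p : ℕ) (hp : p.Prime)
    (e : G1 → G2 → GT)
    (hbil1 : ∀ (A A' : G1) (B : G2), e (A * A') B = e A B * e A' B)
    (hbil2 : ∀ (A : G1) (B B' : G2), e A (B * B') = e A B * e A B')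
    (hord1 : ∀ g : G1, g ^ p = 1) (hord2 : ∀ g : G2, g ^ p = 1)
    (hordT : ∀ g : GT, g ^ p = 1)
    (G : G1) (Ghat : G2) (Y : G1)
    (hnd : ∀ A B : G1, e A Ghat = e B Ghat → A = B) (x r : (ZMod p)ˣ) (M : G1)
    (pk : G2) (hpk : pk = Ghat ^ ((x : ZMod p)).val)
    (Rhat : G2) (hR : Rhat = Ghat ^ ((r : ZMod p)).val)
    (S T : G1)
    (hv1 : e S Rhat = e Y Ghat * e G pk)
    (hv2 : e T Rhat = e Y pk * e M Ghat) :
    S = (Y * G ^ ((x : ZMod p)).val) ^ (((r⁻¹ : (ZMod p)ˣ) : ZMod p)).val ∧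
      T = (Y ^ ((x : ZMod p)).val * M) ^ (((r⁻¹ : (ZMod p)ˣ) : ZMod p)).val ∧
      ∀ M' : G1, e T Rhat = e Y pk * e M' Ghat → M' = M := by
  haveI : Fact p.Prime := ⟨hp⟩
  haveI : NeZero p := ⟨hp.ne_zero⟩
  set rv := ((r : ZMod p)).val with hrv
  set xv := ((x : ZMod p)).val with hxv
  set iv := (((r⁻¹ : (ZMod p)ˣ) : ZMod p)).val with hiv
  -- key modular fact
  have hmod : (rv * iv) % p = 1 % p := by
    have h1 : ((rv * iv : ℕ) : ZMod p) = 1 := by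
      push_cast
      rw [ZMod.natCast_val, ZMod.natCast_val, ZMod.cast_id, ZMod.cast_id]
      exact_mod_cast r.mul_inv
    have := ZMod.natCast_eq_iff p (rv * iv) 1
    have h2 : (rv * iv) % p = (1 : ZMod p).val := by
      rw [← ZMod.val_natCast, h1]
    rw [h2, ZMod.val_one_eq_one_mod]
  have cancel : ∀ g : G1, (g ^ rv) ^ iv = g := by
    intro g
    rw [← pow_mul, groth_pow_mod p hord1, hmod, ← groth_pow_mod p hord1, pow_one]
  -- derive S^rv = Y * G^xv
  have hS : S ^ rv = Y * G ^ xv := by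
    apply hnd
    rw [groth_e_pow_left e hbil1, hbil1, groth_e_pow_left e hbil1,
      ← groth_e_pow_right e hbil1 hbil2 S Ghat rv, ← hR, hv1, hpk,
      groth_e_pow_right e hbil1 hbil2 G Ghat xv]
  have hT : T ^ rv = Y ^ xv * M := by
    apply hnd
    rw [groth_e_pow_left e hbil1, hbil1, groth_e_pow_left e hbil1,
      ← groth_e_pow_right e hbil1 hbil2 T Ghat rv, ← hR, hv2, hpk,
      groth_e_pow_right e hbil1 hbil2 Y Ghat xv]
  refine ⟨by rw [← hS, cancel], by rw [← hT, cancel], ?_⟩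
  intro M' hM'
  apply hnd
  rw [hv2] at hM'
  exact (mul_left_cancel hM').symm
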